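/- The group generated by matrix transposition d together with all row transformations R_r for r in the block-respecting subgroup G ≤ S₉ has order 2 · 6⁸. -/

import Mathlib

/-- The three Sudoku blocks of `Fin 9`: `{0,1,2}, {3,4,5}, {6,7,8}`. -/
def sBlock (k : Fin 3) : Set (Fin 9) := {x | (x : ℕ) / 3 = (k : ℕ)}

/-- A permutation of `Fin 9` is block-respecting if it maps each block onto a block. -/
def BlockRespecting (σ : Equiv.Perm (Fin 9)) : Prop :=
  ∀ k : Fin 3, ∃ l : Fin 3, ⇑σ '' sBlock k = sBlock l

/-- Row permutation as a permutation of index pairs. -/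
def Rp (σ : Equiv.Perm (Fin 9)) : Equiv.Perm (Fin 9 × Fin 9) :=
  σ.prodCongr (Equiv.refl (Fin 9))

/-- Column permutation as a permutation of index pairs. -/
def Cp (σ : Equiv.Perm (Fin 9)) : Equiv.Perm (Fin 9 × Fin 9) :=
  (Equiv.refl (Fin 9)).prodCongr σ

/-- Transposition as a permutation of index pairs. -/
def dp : Equiv.Perm (Fin 9 × Fin 9) := Equiv.prodComm (Fin 9) (Fin 9)

/-- Generators of the Sudoku symmetry group: block-respecting row permutations
together with transposition. -/
def sudokuGen : Set (Equiv.Perm (Fin 9 × Fin 9)) :=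
  {e | ∃ σ : Equiv.Perm (Fin 9), BlockRespecting σ ∧ e = Rp σ} ∪ {dp}

/-! ### Auxiliary material -/

namespace SudokuAux

open Equiv

/-- Block index of `x`. -/
def q (x : Fin 9) : Fin 3 := ⟨(x : ℕ) / 3, by omega⟩

/-- Position within block. -/
def r (x : Fin 9) : Fin 3 := ⟨(x : ℕ) % 3, by omega⟩

def e9 : Fin 9 ≃ Fin 3 × Fin 3 where
  toFun x := (q x, r x)
  invFun p := ⟨3 * (p.1 : ℕ) + (p.2 : ℕ), by omega⟩
  left_inv := by decide
  right_inv := by decide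

lemma q_e9symm (p : Fin 3 × Fin 3) : q (e9.symm p) = p.1 := by
  revert p; decide

lemma mem_sBlock {x : Fin 9} {k : Fin 3} : x ∈ sBlock k ↔ q x = k := by
  simp [sBlock, q, Fin.ext_iff, Set.mem_setOf_eq]

/-- `σ` respects blocks with outer permutation `π`. -/
def BRpi (σ : Perm (Fin 9)) (π : Perm (Fin 3)) : Prop := ∀ x, q (σ x) = π (q x)

lemma brpi_one : BRpi 1 1 := fun _ => rfl

lemma brpi_mul {σ τ : Perm (Fin 9)} {π ρ : Perm (Fin 3)} (h1 : BRpi σ π) (h2 : BRpi τ ρ) :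
    BRpi (σ * τ) (π * ρ) := fun x => by
  simp only [Perm.mul_apply, h2 x, h1 (τ x)]

lemma brpi_inv {σ : Perm (Fin 9)} {π : Perm (Fin 3)} (h : BRpi σ π) : BRpi σ⁻¹ π⁻¹ := by
  intro x
  have := h (σ⁻¹ x)
  rw [show ∀ y, σ (σ⁻¹ y) = y from σ.apply_symm_apply] at this
  rw [this, show ∀ y, π⁻¹ (π y) = y from π.symm_apply_apply]

lemma brpi_blockRespecting {σ : Perm (Fin 9)} {π : Perm (Fin 3)} (h : BRpi σ π) :
    BlockRespecting σ := by
  intro k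
  refine ⟨π k, Set.ext fun y => ?_⟩
  constructor
  · rintro ⟨x, hx, rfl⟩
    rw [mem_sBlock] at hx ⊢
    rw [h x, hx]
  · intro hy
    rw [mem_sBlock] at hy
    refine ⟨σ⁻¹ y, ?_, σ.apply_symm_apply y⟩
    rw [mem_sBlock]
    have := h (σ⁻¹ y)
    rw [show ∀ y, σ (σ⁻¹ y) = y from σ.apply_symm_apply, hy] at this
    exact π.injective this.symm

lemma blockRespecting_brpi {σ : Perm (Fin 9)} (h : BlockRespecting σ) :
    ∃ π : Perm (Fin 3), BRpi σ π := by
  choose g hg using h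
  have ginj : Function.Injective g := by
    intro k k' hkk
    have h1 : ⇑σ '' sBlock k = ⇑σ '' sBlock k' := by rw [hg, hg, hkk]
    rw [Set.image_eq_image σ.injective] at h1
    have hm : e9.symm (k, 0) ∈ sBlock k := by rw [mem_sBlock, q_e9symm]
    rw [h1, mem_sBlock, q_e9symm] at hm
    exact hm
  refine ⟨Equiv.ofBijective g (Finite.injective_iff_bijective.mp ginj), fun x => ?_⟩
  have hx : σ x ∈ ⇑σ '' sBlock (q x) := ⟨x, mem_sBlock.mpr rfl, rfl⟩
  rw [hg] at hx
  exact mem_sBlock.mp hx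

lemma blockRespecting_iff {σ : Perm (Fin 9)} : BlockRespecting σ ↔ ∃ π, BRpi σ π :=
  ⟨blockRespecting_brpi, fun ⟨_, h⟩ => brpi_blockRespecting h⟩

/-! ### Counting block-respecting permutations -/

/-- The wreath-product construction of a block-respecting permutation. -/
def shear (π : Perm (Fin 3)) (f : Fin 3 → Perm (Fin 3)) : Perm (Fin 3 × Fin 3) where
  toFun p := (π p.1, f p.1 p.2)
  invFun p := (π.symm p.1, (f (π.symm p.1)).symm p.2)
  left_inv p := by simp
  right_inv p := by simp

def Phi (π : Perm (Fin 3)) (f : Fin 3 → Perm (Fin 3)) : Perm (Fin 9) :=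
  (e9.trans (shear π f)).trans e9.symm

lemma Phi_apply (π : Perm (Fin 3)) (f : Fin 3 → Perm (Fin 3)) (x : Fin 9) :
    Phi π f x = e9.symm (π (q x), f (q x) (r x)) := rfl

lemma Phi_brpi (π : Perm (Fin 3)) (f : Fin 3 → Perm (Fin 3)) : BRpi (Phi π f) π := by
  intro x
  rw [Phi_apply, q_e9symm]

noncomputable def PhiMap : Perm (Fin 3) × (Fin 3 → Perm (Fin 3)) →
    {σ : Perm (Fin 9) // BlockRespecting σ} :=
  fun p => ⟨Phi p.1 p.2, brpi_blockRespecting (Phi_brpi p.1 p.2)⟩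

lemma PhiMap_bijective : Function.Bijective PhiMap := by
  constructor
  · rintro ⟨π, f⟩ ⟨π', f'⟩ h
    have h' : Phi π f = Phi π' f' := congrArg Subtype.val h
    have key : ∀ (k i : Fin 3), (π k, f k i) = (π' k, f' k i) := by
      intro k i
      have := congrArg (fun σ : Perm (Fin 9) => e9 (σ (e9.symm (k, i)))) h'
      simpa [Phi_apply, q_e9symm, show ∀ p : Fin 3 × Fin 3, r (e9.symm p) = p.2 from by decide]
        using this
    have hπ : π = π' := Equiv.ext fun k => (Prod.mk.injEq _ _ _ _ ▸ key k 0).1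
    have hf : f = f' := funext fun k => Equiv.ext fun i =>
      (Prod.mk.injEq _ _ _ _ ▸ key k i).2
    rw [Prod.mk.injEq]; exact ⟨hπ, hf⟩
  · rintro ⟨σ, hσ⟩
    obtain ⟨π, hπ⟩ := blockRespecting_brpi hσ
    -- inner permutations
    have hinj : ∀ k : Fin 3, Function.Injective (fun i => r (σ (e9.symm (k, i)))) := by
      intro k i j hij
      have hij' : r (σ (e9.symm (k, i))) = r (σ (e9.symm (k, j))) := hij
      have hq : q (σ (e9.symm (k, i))) = q (σ (e9.symm (k, j))) := by
        rw [hπ, hπ, q_e9symm, q_e9symm]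
      have : e9 (σ (e9.symm (k, i))) = e9 (σ (e9.symm (k, j))) := by
        show (q _, r _) = (q _, r _)
        rw [hq, hij']
      have := e9.injective this
      have := σ.injective this
      have := e9.symm.injective this
      exact (Prod.mk.injEq _ _ _ _ ▸ this).2
    let f : Fin 3 → Perm (Fin 3) := fun k =>
      Equiv.ofBijective _ (Finite.injective_iff_bijective.mp (hinj k))
    refine ⟨(π, f), ?_⟩
    have : Phi π f = σ := by
      apply Equiv.ext
      intro x
      have hf : f (q x) (r x) = r (σ x) := by
        show r (σ (e9.symm (q x, r x))) = r (σ x)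
        congr 1
        exact congrArg σ (e9.left_inv x)
      rw [Phi_apply, hf, ← hπ x]
      have : (q (σ x), r (σ x)) = e9 (σ x) := rfl
      rw [this]
      exact e9.left_inv (σ x)
    simp only [PhiMap, this]
lemma card_blockRespecting : Nat.card {σ : Perm (Fin 9) // BlockRespecting σ} = 1296 := by
  rw [← Nat.card_eq_of_bijective PhiMap PhiMap_bijective]
  simp only [Nat.card_eq_fintype_card, Fintype.card_prod, Fintype.card_perm, Fintype.card_fun,
    Fintype.card_fin]
  decide

/-! ### The full symmetry group -/

def dpow (b : Bool) : Perm (Fin 9 × Fin 9) := cond b dp 1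

def F (σ τ : Perm (Fin 9)) (b : Bool) : Perm (Fin 9 × Fin 9) := Rp σ * Cp τ * dpow b

lemma F_apply (σ τ : Perm (Fin 9)) (b : Bool) (x y : Fin 9) :
    F σ τ b (x, y) = cond b (σ y, τ x) (σ x, τ y) := by
  cases b <;> rfl

lemma F_mul (σ τ σ' τ' : Perm (Fin 9)) (b b' : Bool) :
    F σ τ b * F σ' τ' b' = F (σ * cond b τ' σ') (τ * cond b σ' τ') (xor b b') := by
  cases b <;> cases b' <;> exact Equiv.ext fun ⟨x, y⟩ => rfl

lemma F_one : F 1 1 false = 1 := Equiv.ext fun ⟨x, y⟩ => rfl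

lemma F_inv (σ τ : Perm (Fin 9)) (b : Bool) :
    (F σ τ b)⁻¹ = F (cond b τ⁻¹ σ⁻¹) (cond b σ⁻¹ τ⁻¹) b := by
  apply inv_eq_of_mul_eq_one_right
  rw [F_mul]
  cases b <;> simp [F_one]

/-- The explicit subgroup. -/
def H : Subgroup (Perm (Fin 9 × Fin 9)) where
  carrier := {e | ∃ σ τ b, BlockRespecting σ ∧ BlockRespecting τ ∧ e = F σ τ b}
  one_mem' := ⟨1, 1, false, brpi_blockRespecting brpi_one, brpi_blockRespecting brpi_one,
    F_one.symm⟩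
  mul_mem' := by
    rintro _ _ ⟨σ, τ, b, hσ, hτ, rfl⟩ ⟨σ', τ', b', hσ', hτ', rfl⟩
    obtain ⟨π1, h1⟩ := blockRespecting_brpi hσ
    obtain ⟨π2, h2⟩ := blockRespecting_brpi hτ
    obtain ⟨π3, h3⟩ := blockRespecting_brpi hσ'
    obtain ⟨π4, h4⟩ := blockRespecting_brpi hτ'
    refine ⟨σ * cond b τ' σ', τ * cond b σ' τ', xor b b', ?_, ?_, (F_mul ..)⟩
    · cases b
      · exact brpi_blockRespecting (brpi_mul h1 h3)
      · exact brpi_blockRespecting (brpi_mul h1 h4)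
    · cases b
      · exact brpi_blockRespecting (brpi_mul h2 h4)
      · exact brpi_blockRespecting (brpi_mul h2 h3)
  inv_mem' := by
    rintro _ ⟨σ, τ, b, hσ, hτ, rfl⟩
    obtain ⟨π1, h1⟩ := blockRespecting_brpi hσ
    obtain ⟨π2, h2⟩ := blockRespecting_brpi hτ
    refine ⟨cond b τ⁻¹ σ⁻¹, cond b σ⁻¹ τ⁻¹, b, ?_, ?_, F_inv ..⟩
    · cases b
      · exact brpi_blockRespecting (brpi_inv h1)
      · exact brpi_blockRespecting (brpi_inv h2)
    · cases b
      · exact brpi_blockRespecting (brpi_inv h2)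
      · exact brpi_blockRespecting (brpi_inv h1)

lemma Cp_eq (τ : Perm (Fin 9)) : Cp τ = dp * Rp τ * dp := Equiv.ext fun ⟨x, y⟩ => rfl

lemma closure_eq_H : Subgroup.closure sudokuGen = H := by
  apply le_antisymm
  · rw [Subgroup.closure_le]
    rintro e (⟨σ, hσ, rfl⟩ | he)
    · refine ⟨σ, 1, false, hσ, brpi_blockRespecting brpi_one, ?_⟩
      show Rp σ = Rp σ * Cp 1 * dpow false
      exact Equiv.ext fun ⟨x, y⟩ => rfl
    · refine ⟨1, 1, true, brpi_blockRespecting brpi_one, brpi_blockRespecting brpi_one, ?_⟩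
      rw [Set.mem_singleton_iff] at he
      subst he
      show dp = Rp 1 * Cp 1 * dpow true
      exact Equiv.ext fun ⟨x, y⟩ => rfl
  · rintro _ ⟨σ, τ, b, hσ, hτ, rfl⟩
    have hR : ∀ ρ : Perm (Fin 9), BlockRespecting ρ → Rp ρ ∈ Subgroup.closure sudokuGen :=
      fun ρ hρ => Subgroup.subset_closure (Or.inl ⟨ρ, hρ, rfl⟩)
    have hd : dp ∈ Subgroup.closure sudokuGen := Subgroup.subset_closure (Or.inr rfl)
    have hC : Cp τ ∈ Subgroup.closure sudokuGen := by
      rw [Cp_eq]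
      exact mul_mem (mul_mem hd (hR τ hτ)) hd
    have hdp : dpow b ∈ Subgroup.closure sudokuGen := by
      cases b
      · exact one_mem _
      · exact hd
    exact mul_mem (mul_mem (hR σ hσ) hC) hdp

/-- Parameterization of `H`. -/
noncomputable def PsiMap :
    ({σ : Perm (Fin 9) // BlockRespecting σ} × {σ : Perm (Fin 9) // BlockRespecting σ}) × Bool →
    H := fun x => ⟨F x.1.1.1 x.1.2.1 x.2, x.1.1.1, x.1.2.1, x.2, x.1.1.2, x.1.2.2, rfl⟩

lemma F_injective {σ τ σ' τ' : Perm (Fin 9)} {b b' : Bool} (h : F σ τ b = F σ' τ' b') :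
    σ = σ' ∧ τ = τ' ∧ b = b' := by
  have happ : ∀ x y, F σ τ b (x, y) = F σ' τ' b' (x, y) := fun x y => by rw [h]
  simp only [F_apply] at happ
  cases b <;> cases b'
  · refine ⟨Equiv.ext fun x => ?_, Equiv.ext fun y => ?_, rfl⟩
    · exact (Prod.mk.injEq _ _ _ _ ▸ happ x 0).1
    · exact (Prod.mk.injEq _ _ _ _ ▸ happ 0 y).2
  · exfalso
    have h0 := (Prod.mk.injEq _ _ _ _ ▸ happ 0 0).1
    have h1 := (Prod.mk.injEq _ _ _ _ ▸ happ 1 0).1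
    have : σ (0 : Fin 9) = σ 1 := by rw [h0, h1]
    exact absurd (σ.injective this) (by decide)
  · exfalso
    have h0 := (Prod.mk.injEq _ _ _ _ ▸ happ 0 0).1
    have h1 := (Prod.mk.injEq _ _ _ _ ▸ happ 1 0).1
    have : σ' (0 : Fin 9) = σ' 1 := by rw [← h0, ← h1]
    exact absurd (σ'.injective this) (by decide)
  · refine ⟨Equiv.ext fun x => ?_, Equiv.ext fun y => ?_, rfl⟩
    · exact (Prod.mk.injEq _ _ _ _ ▸ happ 0 x).1
    · exact (Prod.mk.injEq _ _ _ _ ▸ happ y 0).2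

lemma PsiMap_bijective : Function.Bijective PsiMap := by
  constructor
  · rintro ⟨⟨⟨σ, hσ⟩, ⟨τ, hτ⟩⟩, b⟩ ⟨⟨⟨σ', hσ'⟩, ⟨τ', hτ'⟩⟩, b'⟩ h
    have h' : F σ τ b = F σ' τ' b' := congrArg Subtype.val h
    obtain ⟨e1, e2, e3⟩ := F_injective h'
    subst e1; subst e2; subst e3; rfl
  · rintro ⟨e, σ, τ, b, hσ, hτ, rfl⟩
    exact ⟨⟨⟨⟨σ, hσ⟩, ⟨τ, hτ⟩⟩, b⟩, rfl⟩

end SudokuAux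

/-- The Sudoku symmetry group has order `2 · 6⁸`. -/
theorem sudoku_symmetry_group_card :
    Nat.card (Subgroup.closure sudokuGen) = 2 * 6 ^ 8 := by
  rw [SudokuAux.closure_eq_H,
    ← Nat.card_eq_of_bijective SudokuAux.PsiMap SudokuAux.PsiMap_bijective,
    Nat.card_prod, Nat.card_prod, SudokuAux.card_blockRespecting]
  simp only [Nat.card_eq_fintype_card, Fintype.card_bool]
  norm_num
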